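/- Let P be a substochastic r×r matrix (nonnegative entries, row sums ≤ 1) such that from every index there is a positive-probability path (in the directed graph of positive entries, allowing exit via the deficiency 1 − row sum) reaching a state where the row sum is strictly less than 1. Then P^k converges to the zero matrix as k → ∞, and consequently every eigenvalue of P has modulus strictly less than 1. -/

import Mathlib

open Finset Filter

section aux
variable {r : ℕ} (P : Matrix (Fin r) (Fin r) ℝ)

-- row sums of powers
private noncomputable def rs (n : ℕ) (i : Fin r) : ℝ := ∑ j, (P ^ n) i j

variable {P}
variable (hnn : ∀ i j, 0 ≤ P i j) (hrow : ∀ i, ∑ j, P i j ≤ 1)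

include hnn in
private lemma pow_nonneg' (n : ℕ) (i j : Fin r) : 0 ≤ (P ^ n) i j := by
  induction n generalizing i j with
  | zero => simp [Matrix.one_apply]; positivity
  | succ n ih =>
    rw [pow_succ', Matrix.mul_apply]
    exact Finset.sum_nonneg fun k _ => mul_nonneg (hnn i k) (ih k j)

include hnn in
private lemma rs_nonneg (n : ℕ) (i : Fin r) : 0 ≤ rs P n i :=
  Finset.sum_nonneg fun j _ => pow_nonneg' hnn n i j

private lemma rs_succ (n : ℕ) (i : Fin r) : rs P (n + 1) i = ∑ k, P i k * rs P n k := by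
  simp only [rs, pow_succ', Matrix.mul_apply, Finset.mul_sum]
  exact Finset.sum_comm

include hnn hrow in
private lemma rs_le_one (n : ℕ) (i : Fin r) : rs P n i ≤ 1 := by
  induction n generalizing i with
  | zero => simp [rs, Matrix.one_apply]
  | succ n ih =>
    rw [rs_succ]
    calc ∑ k, P i k * rs P n k ≤ ∑ k, P i k := by
          refine Finset.sum_le_sum fun k _ => ?_
          calc P i k * rs P n k ≤ P i k * 1 :=
                mul_le_mul_of_nonneg_left (ih k) (hnn i k)
            _ = P i k := mul_one _
      _ ≤ 1 := hrow i

include hnn hrow in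
private lemma rs_antitone (i : Fin r) : Antitone fun n => rs P n i := by
  have key : ∀ n i, rs P (n + 1) i ≤ rs P n i := by
    intro n
    induction n with
    | zero =>
      intro i
      rw [rs_succ]
      calc ∑ k, P i k * rs P 0 k ≤ ∑ k, P i k :=
            Finset.sum_le_sum fun k _ => by
              calc P i k * rs P 0 k ≤ P i k * 1 :=
                    mul_le_mul_of_nonneg_left (rs_le_one hnn hrow 0 k) (hnn i k)
                _ = P i k := mul_one _
        _ ≤ 1 := hrow i
        _ = rs P 0 i := by simp [rs, Matrix.one_apply]
    | succ n ih =>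
      intro i
      rw [rs_succ, rs_succ]
      exact Finset.sum_le_sum fun k _ => mul_le_mul_of_nonneg_left (ih k) (hnn i k)
  exact antitone_nat_of_succ_le fun n => key n i

include hnn hrow in
private lemma rs_path {m : ℕ} {c : ℕ → Fin r}
    (hc : ∀ l < m, 0 < P (c l) (c (l + 1))) (hm : ∑ j, P (c m) j < 1) :
    ∀ t l, l + t = m → rs P (t + 1) (c l) < 1 := by
  intro t
  induction t with
  | zero =>
    intro l hl
    have hlm : l = m := by omega
    subst hlm
    have h1 : rs P 1 (c l) = ∑ j, P (c l) j := by simp [rs, pow_one]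
    rw [h1]; exact hm
  | succ t ih =>
    intro l hl
    have hlm : l < m := by omega
    have hP : 0 < P (c l) (c (l + 1)) := hc l hlm
    have h1 : rs P (t + 1) (c (l + 1)) < 1 := ih (l + 1) (by omega)
    rw [rs_succ]
    calc ∑ k, P (c l) k * rs P (t + 1) k < ∑ k, P (c l) k * 1 := by
          apply Finset.sum_lt_sum
          · intro k _
            exact mul_le_mul_of_nonneg_left (rs_le_one hnn hrow _ k) (hnn _ k)
          · exact ⟨c (l + 1), Finset.mem_univ _, mul_lt_mul_of_pos_left h1 hP⟩
      _ = ∑ k, P (c l) k := by simp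
      _ ≤ 1 := hrow _
end aux

/-- A substochastic matrix from which every state can reach (via positive entries)
a strictly deficient row has powers tending to zero, and all its complex eigenvalues
have modulus strictly less than one. -/
theorem stmt_9 {r : ℕ} (P : Matrix (Fin r) (Fin r) ℝ)
    (hnn : ∀ i j, 0 ≤ P i j) (hrow : ∀ i, ∑ j, P i j ≤ 1)
    (hacc : ∀ i, ∃ (m : ℕ) (c : ℕ → Fin r), c 0 = i ∧
        (∀ l < m, 0 < P (c l) (c (l + 1))) ∧ ∑ j, P (c m) j < 1) :
    Filter.Tendsto (fun k => P ^ k) Filter.atTop (nhds 0) ∧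
      ∀ μ ∈ spectrum ℂ (P.map Complex.ofReal), ‖μ‖ < 1 := by
  have h1 : Filter.Tendsto (fun k => P ^ k) Filter.atTop (nhds 0) := by
    rcases Nat.eq_zero_or_pos r with hr | hr
    · subst hr
      have hz : ∀ k, (P : Matrix (Fin 0) (Fin 0) ℝ) ^ k = 0 := fun k => Subsingleton.elim _ _
      simp only [hz]
      exact tendsto_const_nhds
    · have hex : ∀ i : Fin r, ∃ n, rs P n i < 1 := by
        intro i
        obtain ⟨m, c, hc0, hc, hm⟩ := hacc i
        exact ⟨m + 1, hc0 ▸ rs_path hnn hrow hc hm m 0 (by omega)⟩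
      choose nn hn using hex
      set N := (Finset.univ.sup nn) + 1 with hNdef
      have hNpos : 0 < N := Nat.succ_pos _
      have hNi : ∀ i, rs P N i < 1 := fun i =>
        lt_of_le_of_lt (rs_antitone hnn hrow i
          (le_trans (Finset.le_sup (Finset.mem_univ i)) (Nat.le_succ _))) (hn i)
      have hne : (Finset.univ : Finset (Fin r)).Nonempty := ⟨⟨0, hr⟩, Finset.mem_univ _⟩
      set M : ℕ → ℝ := fun n => Finset.univ.sup' hne (fun i => rs P n i) with hMdef
      have hMle : ∀ n i, rs P n i ≤ M n := fun n i => Finset.le_sup' _ (Finset.mem_univ i)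
      have hM0 : ∀ n, 0 ≤ M n := fun n => le_trans (rs_nonneg hnn n ⟨0, hr⟩) (hMle n _)
      have hρ : M N < 1 := (Finset.sup'_lt_iff hne).2 fun i _ => hNi i
      have hρ0 : 0 ≤ M N := hM0 N
      have hstep : ∀ a, M (N + a) ≤ M N * M a := by
        intro a
        apply Finset.sup'_le
        intro i _
        have hrw : rs P (N + a) i = ∑ k, (P ^ N) i k * rs P a k := by
          simp only [rs, pow_add, Matrix.mul_apply, Finset.mul_sum]
          exact Finset.sum_comm
        rw [hrw]
        calc ∑ k, (P ^ N) i k * rs P a k ≤ ∑ k, (P ^ N) i k * M a :=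
              Finset.sum_le_sum fun k _ =>
                mul_le_mul_of_nonneg_left (hMle a k) (pow_nonneg' hnn N i k)
          _ = rs P N i * M a := by rw [← Finset.sum_mul]; rfl
          _ ≤ M N * M a := mul_le_mul_of_nonneg_right (hMle N i) (hM0 a)
      have hgeo : ∀ k, M (k * N) ≤ M N ^ k := by
        intro k; induction k with
        | zero =>
          simp only [Nat.zero_mul, pow_zero, hMdef]
          exact Finset.sup'_le hne _ fun i _ => rs_le_one hnn hrow 0 i
        | succ k ih =>
          have hkk : (k + 1) * N = N + k * N := by ring
          rw [hkk]
          calc M (N + k * N) ≤ M N * M (k * N) := hstep _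
            _ ≤ M N * M N ^ k := mul_le_mul_of_nonneg_left ih hρ0
            _ = M N ^ (k + 1) := (pow_succ' _ _).symm
      have hMmono : Antitone M := by
        intro a b hab
        apply Finset.sup'_le; intro i _
        exact le_trans (rs_antitone hnn hrow i hab) (hMle a i)
      have hbound : ∀ n, M n ≤ M N ^ (n / N) :=
        fun n => le_trans (hMmono (Nat.div_mul_le_self n N)) (hgeo _)
      have hdiv : Tendsto (fun n : ℕ => n / N) atTop atTop :=
        tendsto_atTop_atTop.2 fun b => ⟨b * N, fun n hn => (Nat.le_div_iff_mul_le hNpos).2 hn⟩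
      have hg : Tendsto (fun n : ℕ => M N ^ (n / N)) atTop (nhds 0) :=
        (tendsto_pow_atTop_nhds_zero_of_lt_one hρ0 hρ).comp hdiv
      refine tendsto_pi_nhds.2 fun i => tendsto_pi_nhds.2 fun j => ?_
      simp only [Matrix.zero_apply]
      refine squeeze_zero (fun n => pow_nonneg' hnn n i j) (fun n => ?_) hg
      calc (P ^ n) i j ≤ rs P n i :=
            Finset.single_le_sum (fun k _ => pow_nonneg' hnn n i k) (Finset.mem_univ j)
        _ ≤ M n := hMle n i
        _ ≤ M N ^ (n / N) := hbound n
  refine ⟨h1, ?_⟩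
  intro μ hμ
  by_contra hcon
  push_neg at hcon
  set A := P.map Complex.ofReal with hAdef
  have hA : ∀ k, A ^ k = (P ^ k).map Complex.ofReal := by
    intro k
    have := map_pow (Complex.ofRealHom.mapMatrix) P k
    exact this.symm
  have hμ' : Module.End.HasEigenvalue (Matrix.toLinAlgEquiv' A) μ :=
    Module.End.hasEigenvalue_iff_mem_spectrum.2 (by rwa [AlgEquiv.spectrum_eq])
  obtain ⟨v, hv⟩ := hμ'.exists_hasEigenvector
  obtain ⟨i, hvi⟩ := Function.ne_iff.mp hv.right
  have hAv : A.mulVec v = μ • v := by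
    have := hv.apply_eq_smul
    rwa [Matrix.toLinAlgEquiv'_apply] at this
  have hmul : ∀ k, (A ^ k).mulVec v = μ ^ k • v := by
    intro k; induction k with
    | zero => simp
    | succ k ih =>
      rw [pow_succ', ← Matrix.mulVec_mulVec, ih, Matrix.mulVec_smul, hAv,
        smul_smul, ← pow_succ]
  set g : Matrix (Fin r) (Fin r) ℝ → ℝ := fun B => ∑ j, |B i j| * ‖v j‖ with hgdef
  have hgc : Continuous g := by
    apply continuous_finset_sum
    intro j _
    exact ((continuous_id.matrix_elem i j).abs).mul continuous_const
  have hgt : Tendsto (fun k => g (P ^ k)) atTop (nhds 0) := by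
    have := (hgc.tendsto 0).comp h1
    simpa [hgdef, Function.comp_def] using this
  have hbd : ∀ k, ‖μ‖ ^ k * ‖v i‖ ≤ g (P ^ k) := by
    intro k
    have h' : (μ ^ k • v) i = ∑ j, ((P ^ k).map Complex.ofReal) i j * v j := by
      rw [← hmul k, hA k]
      simp [Matrix.mulVec, dotProduct]
    calc ‖μ‖ ^ k * ‖v i‖ = ‖(μ ^ k • v) i‖ := by
          simp [Pi.smul_apply, smul_eq_mul, norm_mul, norm_pow]
      _ = ‖∑ j, ((P ^ k).map Complex.ofReal) i j * v j‖ := by rw [h']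
      _ ≤ ∑ j, ‖((P ^ k).map Complex.ofReal) i j * v j‖ :=
          norm_sum_le _ _
      _ = g (P ^ k) := by
          simp [hgdef, Matrix.map_apply, norm_mul, Complex.norm_real, Real.norm_eq_abs]
  have hle : ‖v i‖ ≤ 0 := by
    refine ge_of_tendsto' hgt fun k => le_trans ?_ (hbd k)
    exact le_mul_of_one_le_left (norm_nonneg _) (one_le_pow₀ hcon)
  exact absurd hle (not_le.2 (norm_pos_iff.mpr hvi))
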